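/- arXiv:1903.05327 — 8 statements merged into one kernel-verified Lean document; each statement's English description precedes it below -/
import Mathlib

section
/- For all r ∈ (0,1) and all real θ, x, the quantity 2r(1 + log r − r² + r² log r)·cos(θ+x) + r⁴ − 4r² log r − 1 is negative. -/
open Real in
lemma sinh_lt_mul_cosh {t : ℝ} (ht : 0 < t) : Real.sinh t < t * Real.cosh t := by
  have h : StrictMonoOn (fun s : ℝ => s * Real.cosh s - Real.sinh s) (Set.Ici 0) := by
    apply strictMonoOn_of_deriv_pos (convex_Ici _)
    · exact ((continuous_id.mul Real.continuous_cosh).sub Real.continuous_sinh).continuousOn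
    · intro s hs
      rw [interior_Ici, Set.mem_Ioi] at hs
      have : HasDerivAt (fun s : ℝ => s * Real.cosh s - Real.sinh s)
          (1 * Real.cosh s + s * Real.sinh s - Real.cosh s) s := by
        exact ((hasDerivAt_id s).mul (Real.hasDerivAt_cosh s)).sub (Real.hasDerivAt_sinh s)
      rw [this.deriv]
      have := Real.sinh_pos_iff.mpr hs
      nlinarith
  have := h (Set.self_mem_Ici) (Set.mem_Ici.mpr ht.le) ht
  simpa using this

theorem stmt_2 (r : ℝ) (hr0 : 0 < r) (hr1 : r < 1) (θ x : ℝ) :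
    2 * r * (1 + Real.log r - r ^ 2 + r ^ 2 * Real.log r) * Real.cos (θ + x)
      + r ^ 4 - 4 * r ^ 2 * Real.log r - 1 < 0 := by
  set L := Real.log r with hLdef
  have hL : L < 0 := Real.log_neg hr0 hr1
  set t : ℝ := -L with htdef
  have ht : 0 < t := by linarith
  have hrt : Real.exp (-t) = r := by
    rw [htdef, neg_neg, hLdef, Real.exp_log hr0]
  have hinv : Real.exp t = r⁻¹ := by
    rw [← hrt, ← Real.exp_neg, neg_neg]
  have hsinh : Real.sinh t = (r⁻¹ - r) / 2 := by
    rw [Real.sinh_eq, hinv, hrt]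
  have hcosh : Real.cosh t = (r⁻¹ + r) / 2 := by
    rw [Real.cosh_eq, hinv, hrt]
  have hrne : r ≠ 0 := hr0.ne'
  have hrinv : r * r⁻¹ = 1 := mul_inv_cancel₀ hrne
  -- fact 1 : r^2 - 1 < 2 r L
  have h1 : r ^ 2 - 1 < 2 * r * L := by
    have := Real.self_lt_sinh_iff.mpr ht
    rw [hsinh] at this
    have h2 : 2 * r * t < r * (r⁻¹ - r) := by nlinarith
    have : r * (r⁻¹ - r) = 1 - r ^ 2 := by field_simp
    nlinarith
  -- fact 2 : (1 + r^2) L < r^2 - 1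
  have h2 : (1 + r ^ 2) * L < r ^ 2 - 1 := by
    have hs := sinh_lt_mul_cosh ht
    rw [hsinh, hcosh] at hs
    have h3 : r * (r⁻¹ - r) < r * (t * (r⁻¹ + r)) := by nlinarith
    have e1 : r * (r⁻¹ - r) = 1 - r ^ 2 := by field_simp
    have e2 : r * (t * (r⁻¹ + r)) = t * (1 + r ^ 2) := by
      rw [show r * (t * (r⁻¹ + r)) = t * (r * r⁻¹) + t * (r * r) by ring, hrinv]; ring
    rw [e1, e2] at h3
    nlinarith
  -- cos bounds
  have hc1 : -1 ≤ Real.cos (θ + x) := Real.neg_one_le_cos _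
  have hc2 : Real.cos (θ + x) ≤ 1 := Real.cos_le_one _
  -- A < 0
  have hA : 1 + L - r ^ 2 + r ^ 2 * L < 0 := by nlinarith
  have key : 0 ≤ (-(2 * r * (1 + L - r ^ 2 + r ^ 2 * L))) * (Real.cos (θ + x) + 1) :=
    mul_nonneg (by nlinarith) (by linarith)
  nlinarith [mul_pos hr0 hr0, sq_nonneg (r + 1), mul_pos (mul_pos hr0 hr0) hr0,
    mul_lt_mul_of_pos_left h1 (by positivity : (0:ℝ) < (r+1)^2)]
end

section
/- The function f(r) = (1−r) / ((1+r)·(−2 log r)) is strictly increasing on (0,1), tends to 0 as r → 0⁺, and tends to 1/4 as r → 1⁻. -/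
open Filter

lemma phi_pos' {x : ℝ} (hx : x ∈ Set.Ioo (0:ℝ) 1) : 0 < 1 - x^2 + 2*x*Real.log x := by
  have key : StrictAntiOn (fun x : ℝ => 1 - x^2 + 2*x*Real.log x) (Set.Ioc 0 1) := by
    apply strictAntiOn_of_deriv_neg (convex_Ioc 0 1)
    · apply ContinuousOn.add
      · fun_prop
      · apply ContinuousOn.mul (by fun_prop)
        exact fun y hy => (Real.continuousAt_log (ne_of_gt hy.1)).continuousWithinAt
    · intro y hy
      rw [interior_Ioc] at hy
      have hderiv : HasDerivAt (fun x : ℝ => 1 - x^2 + 2*x*Real.log x)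
          (-(2*y) + (2 * Real.log y + 2*y * y⁻¹)) y := by
        have h1 : HasDerivAt (fun x : ℝ => 1 - x^2) (-(2*y)) y := by
          simpa using ((hasDerivAt_pow 2 y).const_sub 1)
        have h2 : HasDerivAt (fun x : ℝ => 2*x*Real.log x)
            (2 * Real.log y + 2*y * y⁻¹) y := by
          simpa [Pi.mul_def] using (((hasDerivAt_id y).const_mul 2).mul (Real.hasDerivAt_log (ne_of_gt hy.1)))
        exact h1.add h2
      rw [hderiv.deriv]
      have hlog := Real.log_lt_sub_one_of_pos hy.1 (ne_of_lt hy.2)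
      have : y * y⁻¹ = 1 := mul_inv_cancel₀ (ne_of_gt hy.1)
      nlinarith
  have h1 : (1:ℝ) ∈ Set.Ioc (0:ℝ) 1 := by norm_num
  have hx' : x ∈ Set.Ioc (0:ℝ) 1 := ⟨hx.1, le_of_lt hx.2⟩
  have := key hx' h1 hx.2
  simpa using this

theorem stmt_3 :
    StrictMonoOn (fun r : ℝ => (1 - r) / ((1 + r) * (-2 * Real.log r))) (Set.Ioo 0 1) ∧
    Tendsto (fun r : ℝ => (1 - r) / ((1 + r) * (-2 * Real.log r))) (nhdsWithin 0 (Set.Ioi 0))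
      (nhds 0) ∧
    Tendsto (fun r : ℝ => (1 - r) / ((1 + r) * (-2 * Real.log r))) (nhdsWithin 1 (Set.Iio 1))
      (nhds (1 / 4)) := by
  have hden : ∀ x ∈ Set.Ioo (0:ℝ) 1, 0 < (1 + x) * (-2 * Real.log x) := by
    intro x hx
    have hlog : Real.log x < 0 := Real.log_neg hx.1 hx.2
    have : 0 < -2 * Real.log x := by linarith
    have : 0 < 1 + x := by linarith [hx.1]
    positivity
  refine ⟨?_, ?_, ?_⟩
  · apply strictMonoOn_of_deriv_pos (convex_Ioo 0 1)
    · apply ContinuousOn.div (by fun_prop)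
      · apply ContinuousOn.mul (by fun_prop)
        apply ContinuousOn.mul continuousOn_const
        exact fun y hy => (Real.continuousAt_log (ne_of_gt hy.1)).continuousWithinAt
      · exact fun y hy => ne_of_gt (hden y hy)
    · intro x hx
      rw [interior_Ioo] at hx
      have hx0 : (0:ℝ) < x := hx.1
      have hvne := ne_of_gt (hden x hx)
      have hu : HasDerivAt (fun r : ℝ => 1 - r) (-1) x := by
        simpa using (hasDerivAt_id x).const_sub 1
      have hv : HasDerivAt (fun r : ℝ => (1 + r) * (-2 * Real.log r))
          (1 * (-2 * Real.log x) + (1 + x) * (-2 * x⁻¹)) x := by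
        exact ((hasDerivAt_id x).const_add 1).mul
          ((Real.hasDerivAt_log (ne_of_gt hx0)).const_mul (-2))
      have hf : HasDerivAt (fun r : ℝ => (1 - r) / ((1 + r) * (-2 * Real.log r))) _ x :=
        hu.div hv hvne
      rw [hf.deriv]
      apply div_pos
      · have hphi := phi_pos' hx
        have hxinv : x * x⁻¹ = 1 := mul_inv_cancel₀ (ne_of_gt hx0)
        have hnum : ((-1) * ((1 + x) * (-2 * Real.log x)) -
            (1 - x) * (1 * (-2 * Real.log x) + (1 + x) * (-2 * x⁻¹))) * x
            = 2 * (1 - x^2 + 2*x*Real.log x) := by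
          field_simp
          ring
        nlinarith [hden x hx]
      · positivity
  · have hrw : ∀ r : ℝ, (1 - r) / ((1 + r) * (-2 * Real.log r)) =
        ((1 - r) / (1 + r)) * (-2 * Real.log r)⁻¹ := by
      intro r
      rw [div_mul_eq_div_div, div_eq_mul_inv]
    have ha : Tendsto (fun r : ℝ => (1 - r) / (1 + r)) (nhdsWithin 0 (Set.Ioi 0)) (nhds 1) := by
      have hc : ContinuousAt (fun r : ℝ => (1 - r) / (1 + r)) 0 :=
        ContinuousAt.div (by fun_prop) (by fun_prop) (by norm_num)
      have := hc.tendsto.mono_left (nhdsWithin_le_nhds (s := Set.Ioi (0:ℝ)))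
      norm_num at this
      exact this
    have hb : Tendsto (fun r : ℝ => (-2 * Real.log r)⁻¹) (nhdsWithin 0 (Set.Ioi 0)) (nhds 0) := by
      have h1 : Tendsto (fun r : ℝ => -2 * Real.log r) (nhdsWithin 0 (Set.Ioi 0)) atTop :=
        Real.tendsto_log_nhdsGT_zero.const_mul_atBot_of_neg (by norm_num)
      exact tendsto_inv_atTop_zero.comp h1
    have := ha.mul hb
    rw [mul_zero] at this
    exact Tendsto.congr (fun r => (hrw r).symm) this
  · have hrw : ∀ r : ℝ, (1 - r) / ((1 + r) * (-2 * Real.log r)) =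
        ((r - 1) / Real.log r) * (2 * (1 + r))⁻¹ := by
      intro r
      rw [div_eq_mul_inv, div_eq_mul_inv, mul_inv, mul_inv, mul_inv]
      ring
    have hslope : Tendsto (fun r : ℝ => (r - 1) / Real.log r) (nhdsWithin 1 (Set.Iio 1))
        (nhds 1) := by
      have h : HasDerivAt Real.log 1 1 := by
        simpa using Real.hasDerivAt_log (one_ne_zero (α := ℝ))
      have h2 : Tendsto (slope Real.log 1) (nhdsWithin 1 {(1:ℝ)}ᶜ) (nhds 1) := by
        have := hasDerivAt_iff_tendsto_slope.mp h
        simpa using this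
      have h3 : Tendsto (fun r : ℝ => (slope Real.log 1 r)⁻¹) (nhdsWithin 1 {(1:ℝ)}ᶜ)
          (nhds 1) := by
        have := h2.inv₀ (one_ne_zero)
        simpa using this
      have h4 : ∀ r : ℝ, (slope Real.log 1 r)⁻¹ = (r - 1) / Real.log r := by
        intro r
        rw [slope_def_field, Real.log_one, sub_zero, inv_div]
      have h5 := Tendsto.congr h4 h3
      exact h5.mono_left (nhdsWithin_mono 1 (fun y hy => ne_of_lt hy))
    have hc : Tendsto (fun r : ℝ => (2 * (1 + r))⁻¹) (nhdsWithin 1 (Set.Iio 1))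
        (nhds (1/4)) := by
      have hcont : ContinuousAt (fun r : ℝ => (2 * (1 + r))⁻¹) 1 := by
        apply ContinuousAt.inv₀ (by fun_prop) (by norm_num)
      have := hcont.tendsto.mono_left (nhdsWithin_le_nhds (s := Set.Iio (1:ℝ)))
      norm_num at this
      convert this using 2
      norm_num
    have := hslope.mul hc
    rw [one_mul] at this
    exact Tendsto.congr (fun r => (hrw r).symm) this
end

section
/- A probability measure μ on the unit circle satisfies μ(B) = μ(conj(B)) for all Borel sets B if and only if all moments ∫_𝕋 ξⁿ dμ(ξ) (n ∈ ℕ) are real. -/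
open MeasureTheory

namespace Stmt7Aux

open Complex Set

noncomputable section

/-- the unit circle as a set -/
private def S : Set ℂ := {z : ℂ | ‖z‖ = 1}

private lemma S_eq_sphere : S = Metric.sphere 0 1 := by
  ext z; simp [S, Metric.sphere, dist_zero_right]

private lemma S_meas : MeasurableSet S :=
  (isClosed_singleton.preimage continuous_norm).measurableSet

private lemma S_compact : IsCompact S := S_eq_sphere ▸ isCompact_sphere 0 1

private lemma conj_preimage_S : starRingEnd ℂ ⁻¹' S = S := by
  ext z; simp [S]

private lemma conj_image_eq_preimage (B : Set ℂ) :
    starRingEnd ℂ '' B = starRingEnd ℂ ⁻¹' B :=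
  congrFun (Set.image_eq_preimage_of_inverse (g := starRingEnd ℂ)
    (fun z => Complex.conj_conj z) (fun z => Complex.conj_conj z)) B

private lemma restrict_S_eq (m : Measure ℂ) (hm : m Sᶜ = 0) : m.restrict S = m :=
  Measure.restrict_eq_self_of_ae_mem (by
    filter_upwards [measure_eq_zero_iff_ae_notMem.mp hm] with z hz
    simpa using hz)

/-- bridge between integral over the subtype and over ℂ -/
private lemma bridge (m : Measure ℂ) (hm : m Sᶜ = 0) (f : ℂ → ℂ) :
    ∫ x : S, f (x : ℂ) ∂(m.comap Subtype.val) = ∫ z, f z ∂m := by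
  rw [integral_subtype_comap S_meas, restrict_S_eq m hm]

private lemma mono_real_le (μ : Measure ℂ) (hcirc : μ Sᶜ = 0)
    (h : ∀ n : ℕ, (∫ z : ℂ, z ^ n ∂μ).im = 0) {m k : ℕ} (hkm : k ≤ m) :
    ∫ z : ℂ, z ^ m * (starRingEnd ℂ z) ^ k ∂μ = ∫ z : ℂ, z ^ (m - k) ∂μ := by
  have hae : ∀ᵐ z ∂μ, z ∈ S := by
    filter_upwards [measure_eq_zero_iff_ae_notMem.mp hcirc] with z hz; simpa using hz
  refine integral_congr_ae ?_
  filter_upwards [hae] with z hz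
  have h1 : z * starRingEnd ℂ z = 1 := by
    rw [Complex.mul_conj]
    have : Complex.normSq z = 1 := by
      rw [Complex.normSq_eq_norm_sq, hz]; norm_num
    rw [this]; norm_num
  have h2 : z ^ m = z ^ (m - k) * z ^ k := by rw [← pow_add, Nat.sub_add_cancel hkm]
  rw [h2, mul_assoc, ← mul_pow, h1, one_pow, mul_one]

private lemma mono_real (μ : Measure ℂ) (hcirc : μ Sᶜ = 0)
    (h : ∀ n : ℕ, (∫ z : ℂ, z ^ n ∂μ).im = 0) (m k : ℕ) :
    (∫ z : ℂ, z ^ m * (starRingEnd ℂ z) ^ k ∂μ).im = 0 := by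
  rcases le_total k m with hkm | hmk
  · rw [mono_real_le μ hcirc h hkm]; exact h _
  · have heq : (fun z : ℂ => z ^ m * (starRingEnd ℂ z) ^ k)
        = fun z : ℂ => starRingEnd ℂ (z ^ k * (starRingEnd ℂ z) ^ m) := by
      funext z
      rw [map_mul, map_pow, map_pow, Complex.conj_conj]; ring
    rw [heq, integral_conj, Complex.conj_im, mono_real_le μ hcirc h hmk, h, neg_zero]

private instance : CompactSpace ↥S := isCompact_iff_compactSpace.mp S_compact

private lemma conj_meas : Measurable (starRingEnd ℂ) := Complex.continuous_conj.measurable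

private instance comap_finite (m : Measure ℂ) [IsFiniteMeasure m] :
    IsFiniteMeasure (m.comap (Subtype.val : ↥S → ℂ)) := by
  constructor
  rw [(MeasurableEmbedding.subtype_coe S_meas).comap_apply]
  exact (measure_mono (Set.subset_univ _)).trans_lt (measure_lt_top m _)

private lemma cm_integrable (m : Measure ↥S) [IsFiniteMeasure m] (f : C(↥S, ℂ)) :
    Integrable (⇑f) m := by
  have := (BoundedContinuousFunction.mkOfCompact f).integrable (μ := m)
  exact this

private lemma integral_continuous (m : Measure ↥S) [IsFiniteMeasure m] :
    Continuous fun g : C(↥S, ℂ) => ∫ x, g x ∂m := by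
  have : LipschitzWith (m Set.univ).toNNReal (fun g : C(↥S, ℂ) => ∫ x, g x ∂m) := by
    refine LipschitzWith.of_dist_le_mul fun f g => ?_
    have hf : Integrable (⇑f) m := cm_integrable m f
    have hg : Integrable (⇑g) m := cm_integrable m g
    rw [dist_eq_norm, ← integral_sub hf hg]
    calc ‖∫ x, (f x - g x) ∂m‖ ≤ ‖f - g‖ * (m Set.univ).toReal :=
          norm_integral_le_of_norm_le_const (Filter.Eventually.of_forall fun x => by
            simpa using ContinuousMap.norm_coe_le_norm (f - g) x)
      _ = (m Set.univ).toNNReal * dist f g := by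
          rw [dist_eq_norm, mul_comm]
          simp [ENNReal.toReal]
  exact this.continuous

/-- the moments of μ.map conj and μ agree -/
private lemma moments_eq (μ : Measure ℂ) (hcirc : μ Sᶜ = 0)
    (h : ∀ n : ℕ, (∫ z : ℂ, z ^ n ∂μ).im = 0) (m k : ℕ) :
    ∫ z : ℂ, z ^ m * (starRingEnd ℂ z) ^ k ∂(μ.map (starRingEnd ℂ))
      = ∫ z : ℂ, z ^ m * (starRingEnd ℂ z) ^ k ∂μ := by
  rw [integral_map conj_meas.aemeasurable (f := fun z : ℂ => z ^ m * (starRingEnd ℂ z) ^ k)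
    (((continuous_pow m).mul ((Complex.continuous_conj.pow k))).aestronglyMeasurable)]
  have h1 : (fun z : ℂ => (starRingEnd ℂ z) ^ m * (starRingEnd ℂ (starRingEnd ℂ z)) ^ k)
      = fun z : ℂ => starRingEnd ℂ (z ^ m * (starRingEnd ℂ z) ^ k) := by
    funext z; rw [map_mul, map_pow, map_pow]
  rw [h1, integral_conj]
  exact Complex.conj_eq_iff_im.mpr (mono_real μ hcirc h m k)

private lemma measures_eq (μ : Measure ℂ) [IsProbabilityMeasure μ] (hcirc : μ Sᶜ = 0)
    (h : ∀ n : ℕ, (∫ z : ℂ, z ^ n ∂μ).im = 0) :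
    μ.map (starRingEnd ℂ) = μ := by
  set ν := μ.map (starRingEnd ℂ) with hν_def
  haveI : IsProbabilityMeasure ν := Measure.isProbabilityMeasure_map conj_meas.aemeasurable
  have hν : ν Sᶜ = 0 := by
    rw [hν_def, Measure.map_apply conj_meas S_meas.compl, Set.preimage_compl, conj_preimage_S]
    exact hcirc
  set μ' := μ.comap (Subtype.val : ↥S → ℂ) with hμ'
  set ν' := ν.comap (Subtype.val : ↥S → ℂ) with hν'
  -- integrals of continuous complex functions on S agree
  have key : ∀ g : C(↥S, ℂ), ∫ x, g x ∂μ' = ∫ x, g x ∂ν' := by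
    set T : Set C(↥S, ℂ) := {g | ∫ x, g x ∂μ' = ∫ x, g x ∂ν'} with hT
    have hclosed : IsClosed T := isClosed_eq (integral_continuous μ') (integral_continuous ν')
    set xM : C(↥S, ℂ) := Polynomial.toContinuousMapOnAlgHom S Polynomial.X with hxM
    have hmonoT : ∀ m k : ℕ, (xM ^ m * star xM ^ k) ∈ T := by
      intro m k
      have hfun : ∀ x : ↥S, (xM ^ m * star xM ^ k) x
          = (x : ℂ) ^ m * (starRingEnd ℂ (x : ℂ)) ^ k := by
        intro x
        simp [hxM, Complex.star_def]
      show ∫ x, (xM ^ m * star xM ^ k) x ∂μ' = ∫ x, (xM ^ m * star xM ^ k) x ∂ν'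
      simp_rw [hfun]
      calc ∫ x : ↥S, ((x : ℂ)) ^ m * (starRingEnd ℂ (x : ℂ)) ^ k ∂μ'
          = ∫ z, z ^ m * (starRingEnd ℂ z) ^ k ∂μ :=
            bridge μ hcirc (fun z => z ^ m * (starRingEnd ℂ z) ^ k)
        _ = ∫ z, z ^ m * (starRingEnd ℂ z) ^ k ∂ν := (moments_eq μ hcirc h m k).symm
        _ = ∫ x : ↥S, ((x : ℂ)) ^ m * (starRingEnd ℂ (x : ℂ)) ^ k ∂ν' :=
            (bridge ν hν (fun z => z ^ m * (starRingEnd ℂ z) ^ k)).symm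
    have hsub : ((polynomialFunctions S).starClosure : Set C(↥S, ℂ)) ⊆ T := by
      intro g hg
      rw [SetLike.mem_coe, polynomialFunctions.starClosure_eq_adjoin_X] at hg
      have hg2 : g ∈ Submodule.span ℂ
          ((Submonoid.closure ({xM} ∪ star {xM}) : Submonoid C(↥S, ℂ)) : Set C(↥S, ℂ)) := by
        rw [← Algebra.adjoin_eq_span]
        exact hg
      refine Submodule.span_induction ?_ ?_ ?_ ?_ hg2
      · intro c hc
        have : ∃ m k : ℕ, c = xM ^ m * star xM ^ k := by
          refine Submonoid.closure_induction ?_ ?_ ?_ hc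
          · rintro y (rfl | hy)
            · exact ⟨1, 0, by simp⟩
            · rw [Set.star_singleton, Set.mem_singleton_iff] at hy
              exact ⟨0, 1, by simp [hy]⟩
          · exact ⟨0, 0, by simp⟩
          · rintro a b - - ⟨m1, k1, rfl⟩ ⟨m2, k2, rfl⟩
            exact ⟨m1 + m2, k1 + k2, by ring⟩
        obtain ⟨m, k, rfl⟩ := this
        exact hmonoT m k
      · show (0 : C(↥S, ℂ)) ∈ T
        simp [hT, integral_zero]
      · intro a b _ _ ha hb
        show ∫ x, (a + b) x ∂μ' = ∫ x, (a + b) x ∂ν'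
        have hai : Integrable (⇑a) μ' := cm_integrable μ' a
        have hbi : Integrable (⇑b) μ' := cm_integrable μ' b
        have hai' : Integrable (⇑a) ν' := cm_integrable ν' a
        have hbi' : Integrable (⇑b) ν' := cm_integrable ν' b
        simp only [ContinuousMap.add_apply]
        rw [integral_add hai hbi, integral_add hai' hbi', ha, hb]
      · intro c a _ ha
        show ∫ x, (c • a) x ∂μ' = ∫ x, (c • a) x ∂ν'
        simp only [ContinuousMap.smul_apply]
        rw [integral_smul, integral_smul, ha]
    intro g
    have hg : g ∈ closure ((polynomialFunctions S).starClosure : Set C(↥S, ℂ)) := by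
      have := polynomialFunctions.starClosure_topologicalClosure S ▸
        (StarSubalgebra.mem_top (x := g))
      rwa [← SetLike.mem_coe, StarSubalgebra.topologicalClosure_coe] at this
    exact closure_minimal hsub hclosed hg
  -- upgrade to equality of the comapped measures
  have hμν : μ' = ν' := by
    apply ext_of_forall_lintegral_eq_of_IsFiniteMeasure
    intro f
    have hfc : Continuous fun x : ↥S => ((f x : ℝ) : ℂ) :=
      Complex.continuous_ofReal.comp (NNReal.continuous_coe.comp f.continuous)
    have hint : Integrable (fun x : ↥S => ((f x : ℝ))) μ' := by
      exact f.integrable_of_nnreal (μ := μ')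
    have hint' : Integrable (fun x : ↥S => ((f x : ℝ))) ν' := by
      exact f.integrable_of_nnreal (μ := ν')
    have := key ⟨fun x => ((f x : ℝ) : ℂ), hfc⟩
    simp only [ContinuousMap.coe_mk] at this
    have hre : ∫ x, ((f x : ℝ)) ∂μ' = ∫ x, ((f x : ℝ)) ∂ν' := by
      have hic : Integrable (fun x : ↥S => ((f x : ℝ) : ℂ)) μ' := cm_integrable μ' ⟨_, hfc⟩
      have hic' : Integrable (fun x : ↥S => ((f x : ℝ) : ℂ)) ν' := cm_integrable ν' ⟨_, hfc⟩
      have e1 := integral_re hic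
      have e2 := integral_re hic'
      simp only [RCLike.re_to_complex, Complex.ofReal_re] at e1 e2
      rw [e1, e2]
      exact congrArg Complex.re this
    rw [← ENNReal.toReal_eq_toReal_iff' (f.lintegral_lt_top_of_nnreal (μ := μ')).ne
        (f.lintegral_lt_top_of_nnreal (μ := ν')).ne,
      BoundedContinuousFunction.toReal_lintegral_coe_eq_integral f μ',
      BoundedContinuousFunction.toReal_lintegral_coe_eq_integral f ν']
    exact hre
  calc ν = ν.restrict S := (restrict_S_eq ν hν).symm
    _ = ν'.map Subtype.val := (map_comap_subtype_coe S_meas ν).symm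
    _ = μ'.map Subtype.val := by rw [hμν]
    _ = μ.restrict S := map_comap_subtype_coe S_meas μ
    _ = μ := restrict_S_eq μ hcirc

end

end Stmt7Aux

theorem stmt_7 (μ : Measure ℂ) [IsProbabilityMeasure μ]
    (hcirc : μ {z : ℂ | ‖z‖ = 1}ᶜ = 0) :
    (∀ B : Set ℂ, MeasurableSet B → μ B = μ ((starRingEnd ℂ) '' B)) ↔
      ∀ n : ℕ, (∫ z : ℂ, z ^ n ∂μ).im = 0 := by
  have hcirc' : μ Stmt7Aux.Sᶜ = 0 := hcirc
  constructor
  · intro h n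
    have hmap : μ.map (starRingEnd ℂ) = μ := by
      refine Measure.ext fun B hB => ?_
      rw [Measure.map_apply Stmt7Aux.conj_meas hB, ← Stmt7Aux.conj_image_eq_preimage,
        ← h B hB]
    have : ∫ z : ℂ, z ^ n ∂μ = starRingEnd ℂ (∫ z : ℂ, z ^ n ∂μ) := by
      conv_lhs => rw [← hmap]
      rw [integral_map Stmt7Aux.conj_meas.aemeasurable
        ((continuous_pow n).aestronglyMeasurable)]
      have : (fun z : ℂ => (starRingEnd ℂ z) ^ n)
          = fun z : ℂ => starRingEnd ℂ (z ^ n) := by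
        funext z; rw [map_pow]
      rw [this, integral_conj]
    have h2 := congrArg Complex.im this
    rw [Complex.conj_im] at h2
    linarith
  · intro h B hB
    have hmap := Stmt7Aux.measures_eq μ hcirc' h
    rw [Stmt7Aux.conj_image_eq_preimage, ← Measure.map_apply Stmt7Aux.conj_meas hB, hmap]
end

section
/- Let f, g : ℝ → [0,∞) be continuous, even, 2π-periodic probability density functions (∫_{−π}^{π} f = ∫_{−π}^{π} g = 1) that are non-increasing on (0, π). Then the periodic convolution h(φ) = ∫_{−π}^{π} f(θ) g(φ−θ) dθ is even, 2π-periodic, and non-increasing on (0, π). -/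
open Real

/-- Continuity extends antitonicity from the open interval to the closed one. -/
lemma aux_icc (g : ℝ → ℝ) (hgc : Continuous g) (hgm : AntitoneOn g (Set.Ioo 0 π)) :
    AntitoneOn g (Set.Icc 0 π) := by
  rintro a ⟨ha0, haπ⟩ b ⟨hb0, hbπ⟩ hab
  rcases eq_or_lt_of_le hab with rfl | hab
  · exact le_rfl
  set c : ℝ := (a + b) / 2 with hc
  have hac : a < c := by simp only [hc]; linarith
  have hcb : c < b := by simp only [hc]; linarith
  have hc0 : 0 < c := lt_of_le_of_lt ha0 hac
  have hcπ : c < π := lt_of_lt_of_le hcb hbπ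
  have h1 : g c ≤ g a := by
    have ht : Filter.Tendsto g (nhdsWithin a (Set.Ioi a)) (nhds (g a)) :=
      (hgc.tendsto a).mono_left nhdsWithin_le_nhds
    refine ge_of_tendsto ht ?_
    have hmem : Set.Ioo a c ∈ nhdsWithin a (Set.Ioi a) :=
      Ioo_mem_nhdsGT_of_mem ⟨le_refl a, hac⟩
    filter_upwards [hmem] with x hx
    exact hgm ⟨lt_of_le_of_lt ha0 hx.1, lt_trans hx.2 hcπ⟩ ⟨hc0, hcπ⟩ hx.2.le
  have h2 : g b ≤ g c := by
    have ht : Filter.Tendsto g (nhdsWithin b (Set.Iio b)) (nhds (g b)) :=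
      (hgc.tendsto b).mono_left nhdsWithin_le_nhds
    refine le_of_tendsto ht ?_
    have hmem : Set.Ioo c b ∈ nhdsWithin b (Set.Iio b) :=
      Ioo_mem_nhdsLT_of_mem ⟨hcb, le_refl b⟩
    filter_upwards [hmem] with x hx
    exact hgm ⟨hc0, hcπ⟩ ⟨lt_trans hc0 hx.1, lt_of_lt_of_le hx.2 hbπ⟩ hx.1.le
  exact le_trans h2 h1

/-- Key comparison for symmetric unimodal periodic functions. -/
lemma aux_cmp (g : ℝ → ℝ) (hge : ∀ x, g (-x) = g x) (hgp : Function.Periodic g (2 * π))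
    (hm : AntitoneOn g (Set.Icc 0 π)) :
    ∀ u ∈ Set.Icc (0:ℝ) π, ∀ d ∈ Set.Icc (0:ℝ) π, g (u + d) ≤ g (u - d) := by
  rintro u ⟨hu0, huπ⟩ d ⟨hd0, hdπ⟩
  have habs : g (u - d) = g |u - d| := by
    rcases le_or_gt 0 (u - d) with h | h
    · rw [abs_of_nonneg h]
    · rw [abs_of_neg h]
      exact (hge _).symm
  have habs_mem : |u - d| ∈ Set.Icc (0:ℝ) π := by
    constructor
    · exact abs_nonneg _
    · rw [abs_le]; constructor <;> linarith
  rcases le_or_gt (u + d) π with hle | hgt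
  · rw [habs]
    exact hm habs_mem ⟨by linarith, hle⟩ (by rw [abs_le]; constructor <;> linarith)
  · have h1 : g (u + d) = g (2 * π - (u + d)) := by
      have h2 := hgp (u + d - 2 * π)
      rw [sub_add_cancel] at h2
      rw [h2, show u + d - 2*π = -(2*π - (u + d)) by ring, hge]
    rw [h1, habs]
    exact hm habs_mem ⟨by linarith, by linarith⟩ (by rw [abs_le]; constructor <;> linarith)

theorem stmt_9 (f g : ℝ → ℝ)
    (hfc : Continuous f) (hgc : Continuous g)
    (hf0 : ∀ x, 0 ≤ f x) (hg0 : ∀ x, 0 ≤ g x)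
    (hfe : ∀ x, f (-x) = f x) (hge : ∀ x, g (-x) = g x)
    (hfp : Function.Periodic f (2 * π)) (hgp : Function.Periodic g (2 * π))
    (hf1 : (∫ θ in (-π)..π, f θ) = 1) (hg1 : (∫ θ in (-π)..π, g θ) = 1)
    (hfm : AntitoneOn f (Set.Ioo 0 π)) (hgm : AntitoneOn g (Set.Ioo 0 π)) :
    (∀ φ, (∫ θ in (-π)..π, f θ * g (-φ - θ)) = ∫ θ in (-π)..π, f θ * g (φ - θ)) ∧
    Function.Periodic (fun φ => ∫ θ in (-π)..π, f θ * g (φ - θ)) (2 * π) ∧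
    AntitoneOn (fun φ => ∫ θ in (-π)..π, f θ * g (φ - θ)) (Set.Ioo 0 π) := by
  have hfI := aux_icc f hfc hfm
  have hgI := aux_icc g hgc hgm
  have hfK := aux_cmp f hfe hfp hfI
  have hgK := aux_cmp g hge hgp hgI
  refine ⟨?_, ?_, ?_⟩
  · -- evenness
    intro φ
    have h := intervalIntegral.integral_comp_neg (fun x => f x * g (-φ - x)) (a := -π) (b := π)
    simp only [neg_neg] at h
    rw [← h]
    refine intervalIntegral.integral_congr fun x _ => ?_
    rw [hfe, show -φ - -x = -(φ - x) by ring, hge]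
  · -- periodicity
    intro φ
    refine intervalIntegral.integral_congr fun θ _ => ?_
    rw [show φ + 2*π - θ = (φ - θ) + 2*π by ring, hgp]
  · -- antitone
    rintro φ1 ⟨hφ10, hφ1π⟩ φ2 ⟨hφ20, hφ2π⟩ h12
    simp only
    set m : ℝ := (φ1 + φ2) / 2 with hm_def
    set d : ℝ := (φ2 - φ1) / 2 with hd_def
    have hmI : m ∈ Set.Icc (0:ℝ) π := ⟨by rw [hm_def]; linarith, by rw [hm_def]; linarith⟩
    have hdI : d ∈ Set.Icc (0:ℝ) π := ⟨by rw [hd_def]; linarith, by rw [hd_def]; linarith⟩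
    -- step A: shift the integration variable
    have stepA : ∀ φ : ℝ, (∫ θ in (-π)..π, f θ * g (φ - θ))
        = ∫ u in (-π)..π, f (m + u) * g (φ - m - u) := by
      intro φ
      have hFper : Function.Periodic (fun θ => f θ * g (φ - θ)) (2 * π) := by
        intro x
        simp only
        have h2 := hgp (φ - x - 2 * π)
        rw [sub_add_cancel] at h2
        rw [hfp x, show φ - (x + 2*π) = φ - x - 2*π by ring, h2]
      have hcomp := intervalIntegral.integral_comp_add_right
        (fun θ => f θ * g (φ - θ)) (a := -π) (b := π) m
      have hshift := hFper.intervalIntegral_add_eq (-π + m) (-π)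
      have e1 : -π + m + 2*π = π + m := by ring
      have e2 : -π + 2*π = π := by ring
      rw [e1, e2] at hshift
      calc (∫ θ in (-π)..π, f θ * g (φ - θ))
          = ∫ θ in (-π + m)..(π + m), f θ * g (φ - θ) := hshift.symm
        _ = ∫ u in (-π)..π, f (u + m) * g (φ - (u + m)) := hcomp.symm
        _ = ∫ u in (-π)..π, f (m + u) * g (φ - m - u) := by
            refine intervalIntegral.integral_congr fun u _ => ?_
            rw [add_comm u m, show φ - (m + u) = φ - m - u by ring]
    have hA : (∫ θ in (-π)..π, f θ * g (φ2 - θ)) = ∫ u in (-π)..π, f (m + u) * g (d - u) := by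
      rw [stepA φ2]
      refine intervalIntegral.integral_congr fun u _ => ?_
      rw [show φ2 - m - u = d - u by rw [hm_def, hd_def]; ring]
    have hB : (∫ θ in (-π)..π, f θ * g (φ1 - θ)) = ∫ u in (-π)..π, f (m + u) * g (-d - u) := by
      rw [stepA φ1]
      refine intervalIntegral.integral_congr fun u _ => ?_
      rw [show φ1 - m - u = -d - u by rw [hm_def, hd_def]; ring]
    -- split each integral at 0 and reflect the negative part
    have hsplit : ∀ K : ℝ → ℝ, Continuous K →
        (∫ u in (-π)..π, K u) = (∫ u in (0:ℝ)..π, K (-u)) + ∫ u in (0:ℝ)..π, K u := by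
      intro K hK
      have h1 := intervalIntegral.integral_add_adjacent_intervals
        (hK.intervalIntegrable (-π) 0 : IntervalIntegrable K MeasureTheory.volume (-π) 0)
        (hK.intervalIntegrable 0 π : IntervalIntegrable K MeasureTheory.volume 0 π)
      have h2 := intervalIntegral.integral_comp_neg K (a := (0:ℝ)) (b := π)
      simp only [neg_zero] at h2
      rw [← h1, h2]
    have hKA := hsplit (fun u => f (m + u) * g (d - u)) (by fun_prop)
    have hKB := hsplit (fun u => f (m + u) * g (-d - u)) (by fun_prop)
    -- canonical forms of the four integrals
    have eA1 : (∫ u in (0:ℝ)..π, f (m + -u) * g (d - -u)) = ∫ u in (0:ℝ)..π, f (m - u) * g (u + d) :=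
      intervalIntegral.integral_congr fun u _ => by
        rw [show m + -u = m - u by ring, show d - -u = u + d by ring]
    have eA2 : (∫ u in (0:ℝ)..π, f (m + u) * g (d - u)) = ∫ u in (0:ℝ)..π, f (m + u) * g (u - d) :=
      intervalIntegral.integral_congr fun u _ => by
        rw [show d - u = -(u - d) by ring, hge]
    have eB1 : (∫ u in (0:ℝ)..π, f (m + -u) * g (-d - -u)) = ∫ u in (0:ℝ)..π, f (m - u) * g (u - d) :=
      intervalIntegral.integral_congr fun u _ => by
        rw [show m + -u = m - u by ring, show -d - -u = u - d by ring]
    have eB2 : (∫ u in (0:ℝ)..π, f (m + u) * g (-d - u)) = ∫ u in (0:ℝ)..π, f (m + u) * g (u + d) :=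
      intervalIntegral.integral_congr fun u _ => by
        rw [show -d - u = -(u + d) by ring, hge]
    rw [eA1, eA2] at hKA
    rw [eB1, eB2] at hKB
    -- combine into one nonnegative integral
    have hcomb : (∫ u in (0:ℝ)..π, (f (m - u) - f (m + u)) * (g (u - d) - g (u + d)))
        = ((∫ u in (0:ℝ)..π, f (m - u) * g (u - d)) + ∫ u in (0:ℝ)..π, f (m + u) * g (u + d))
          - ((∫ u in (0:ℝ)..π, f (m - u) * g (u + d)) + ∫ u in (0:ℝ)..π, f (m + u) * g (u - d)) := by
      rw [← intervalIntegral.integral_add ((by fun_prop : Continuous fun u : ℝ => f (m - u) * g (u - d)).intervalIntegrable 0 π) ((by fun_prop : Continuous fun u : ℝ => f (m + u) * g (u + d)).intervalIntegrable 0 π)]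
      rw [← intervalIntegral.integral_add ((by fun_prop : Continuous fun u : ℝ => f (m - u) * g (u + d)).intervalIntegrable 0 π) ((by fun_prop : Continuous fun u : ℝ => f (m + u) * g (u - d)).intervalIntegrable 0 π)]
      rw [← intervalIntegral.integral_sub (((by fun_prop : Continuous fun u : ℝ => f (m - u) * g (u - d) + f (m + u) * g (u + d))).intervalIntegrable 0 π) ((by fun_prop : Continuous fun u : ℝ => f (m - u) * g (u + d) + f (m + u) * g (u - d)).intervalIntegrable 0 π)]
      exact intervalIntegral.integral_congr fun u _ => by ring
    have hnonneg : 0 ≤ ∫ u in (0:ℝ)..π, (f (m - u) - f (m + u)) * (g (u - d) - g (u + d)) := by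
      refine intervalIntegral.integral_nonneg pi_nonneg fun u hu => ?_
      refine mul_nonneg (sub_nonneg.2 ?_) (sub_nonneg.2 ?_)
      · exact hfK m hmI u hu
      · exact hgK u hu d hdI
    rw [hA, hB, hKA, hKB]
    linarith [hcomb, hnonneg]
end

section
/- Let r ∈ (0,1) and f_r(θ) = ((1−r²)/(2π))·(1/(1 − 2r cos θ + r²) + 1/(1 + 2r cos θ + r²)). Then f_r attains a strict global maximum at θ = 0 and θ = π, and a strict local minimum at θ = π/2 and θ = −π/2 on [−π, π); in particular there exists a > 0 such that the equation f_r(θ) = a has at least three solutions θ ∈ [−π, π). -/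
open Real

private lemma aux_denom_pos {r : ℝ} (hr0 : 0 < r) (hr1 : r < 1) (θ : ℝ) :
    0 < (1 + r ^ 2) ^ 2 - 4 * r ^ 2 * Real.cos θ ^ 2 := by
  have h1 := Real.neg_one_le_cos θ
  have h2 := Real.cos_le_one θ
  have hrr : 0 < 1 - r ^ 2 := by nlinarith
  nlinarith [mul_pos hrr hrr, mul_nonneg (by linarith : (0:ℝ) ≤ 1 - Real.cos θ)
    (by linarith : (0:ℝ) ≤ 1 + Real.cos θ), sq_nonneg r]

private lemma f_formula {r : ℝ} (hr0 : 0 < r) (hr1 : r < 1) (θ : ℝ) :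
    (1 - r ^ 2) / (2 * π) *
      (1 / (1 - 2 * r * Real.cos θ + r ^ 2) + 1 / (1 + 2 * r * Real.cos θ + r ^ 2)) =
    (1 - r ^ 2) / (2 * π) *
      (2 * (1 + r ^ 2) / ((1 + r ^ 2) ^ 2 - 4 * r ^ 2 * Real.cos θ ^ 2)) := by
  have hc1 := Real.neg_one_le_cos θ
  have hc2 := Real.cos_le_one θ
  have hp : 0 < (1 - r) ^ 2 := pow_pos (by linarith) 2
  have h1 : 0 < 1 - 2 * r * Real.cos θ + r ^ 2 := by
    nlinarith [mul_nonneg hr0.le (by linarith : (0:ℝ) ≤ 1 - Real.cos θ)]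
  have h2 : 0 < 1 + 2 * r * Real.cos θ + r ^ 2 := by
    nlinarith [mul_nonneg hr0.le (by linarith : (0:ℝ) ≤ 1 + Real.cos θ)]
  have key : (1 + r ^ 2) ^ 2 - 4 * r ^ 2 * Real.cos θ ^ 2
      = (1 - 2 * r * Real.cos θ + r ^ 2) * (1 + 2 * r * Real.cos θ + r ^ 2) := by ring
  rw [key]
  congr 1
  field_simp
  ring

theorem stmt_12 (r : ℝ) (hr : r ∈ Set.Ioo (0 : ℝ) 1) :
    let f : ℝ → ℝ := fun θ => (1 - r ^ 2) / (2 * π) *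
      (1 / (1 - 2 * r * Real.cos θ + r ^ 2) + 1 / (1 + 2 * r * Real.cos θ + r ^ 2))
    (∀ θ ∈ Set.Ico (-π) π, θ ≠ 0 → θ ≠ -π → f θ < f 0) ∧
    f (-π) = f 0 ∧
    (∃ ε > 0, ∀ θ : ℝ, |θ - π / 2| < ε → θ ≠ π / 2 → f (π / 2) < f θ) ∧
    (∃ ε > 0, ∀ θ : ℝ, |θ - (-(π / 2))| < ε → θ ≠ -(π / 2) → f (-(π / 2)) < f θ) ∧
    (∃ a > (0 : ℝ), ∃ θ₁ θ₂ θ₃ : ℝ, θ₁ ∈ Set.Ico (-π) π ∧ θ₂ ∈ Set.Ico (-π) π ∧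
      θ₃ ∈ Set.Ico (-π) π ∧ θ₁ ≠ θ₂ ∧ θ₁ ≠ θ₃ ∧ θ₂ ≠ θ₃ ∧
      f θ₁ = a ∧ f θ₂ = a ∧ f θ₃ = a) := by
  obtain ⟨hr0, hr1⟩ := hr
  intro f
  have hpi := Real.pi_pos
  have hf : ∀ θ, f θ = (1 - r ^ 2) / (2 * π) *
      (2 * (1 + r ^ 2) / ((1 + r ^ 2) ^ 2 - 4 * r ^ 2 * Real.cos θ ^ 2)) :=
    fun θ => f_formula hr0 hr1 θ
  have hC : 0 < (1 - r ^ 2) / (2 * π) := by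
    apply div_pos (by nlinarith) (by linarith)
  have hlt : ∀ a b : ℝ, Real.cos a ^ 2 < Real.cos b ^ 2 → f a < f b := by
    intro a b h
    rw [hf a, hf b]
    apply mul_lt_mul_of_pos_left _ hC
    apply div_lt_div_of_pos_left (by positivity) (aux_denom_pos hr0 hr1 b)
    have : 0 < 4 * r ^ 2 * (Real.cos b ^ 2 - Real.cos a ^ 2) :=
      mul_pos (by positivity) (by linarith)
    linarith
  have heq : ∀ a b : ℝ, Real.cos a ^ 2 = Real.cos b ^ 2 → f a = f b := by
    intro a b h
    rw [hf a, hf b, h]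
  refine ⟨?_, ?_, ?_, ?_, ?_⟩
  · -- strict global max at 0
    intro θ hθ h0 hπ
    apply hlt
    rw [Real.cos_zero]
    have hc2 := Real.cos_le_one θ
    have hc1 := Real.neg_one_le_cos θ
    have hne1 : Real.cos θ ≠ 1 := by
      intro h
      exact h0 ((Real.cos_eq_one_iff_of_lt_of_lt (by linarith [hθ.1]) (by linarith [hθ.2])).1 h)
    have hnem1 : Real.cos θ ≠ -1 := by
      intro h
      have hcc : Real.cos (θ + π) = 1 := by
        rw [Real.cos_add_pi, h]; ring
      have := (Real.cos_eq_one_iff_of_lt_of_lt (by linarith [hθ.1]) (by linarith [hθ.2])).1 hcc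
      exact hπ (by linarith)
    have h1 : Real.cos θ < 1 := lt_of_le_of_ne hc2 hne1
    have h2 : -1 < Real.cos θ := lt_of_le_of_ne (by linarith) (Ne.symm hnem1)
    nlinarith
  · -- f(-π) = f 0
    apply heq
    rw [Real.cos_neg, Real.cos_pi, Real.cos_zero]
    norm_num
  · -- local min at π/2
    refine ⟨π, hpi, fun θ hθ hne => ?_⟩
    rw [abs_lt] at hθ
    apply hlt
    rw [Real.cos_pi_div_two]
    have hcne : Real.cos θ ≠ 0 := by
      intro h
      obtain ⟨n, hn⟩ := Real.cos_eq_zero_iff.1 h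
      have hlo : (-1 : ℝ) < (n : ℝ) := by nlinarith
      have hhi : (n : ℝ) < 1 := by nlinarith
      have hlo' : (-1 : ℤ) < n := by exact_mod_cast hlo
      have hhi' : n < (1 : ℤ) := by exact_mod_cast hhi
      have : n = 0 := by omega
      subst this
      apply hne
      rw [hn]; push_cast; ring
    have := sq_pos_of_ne_zero hcne
    simpa using this
  · -- local min at -π/2
    refine ⟨π, hpi, fun θ hθ hne => ?_⟩
    rw [abs_lt] at hθ
    apply hlt
    rw [Real.cos_neg, Real.cos_pi_div_two]
    have hcne : Real.cos θ ≠ 0 := by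
      intro h
      obtain ⟨n, hn⟩ := Real.cos_eq_zero_iff.1 h
      have hlo : (-2 : ℝ) < (n : ℝ) := by nlinarith
      have hhi : (n : ℝ) < 0 := by nlinarith
      have hlo' : (-2 : ℤ) < n := by exact_mod_cast hlo
      have hhi' : n < (0 : ℤ) := by exact_mod_cast hhi
      have : n = -1 := by omega
      subst this
      apply hne
      rw [hn]; push_cast; ring
    have := sq_pos_of_ne_zero hcne
    simpa using this
  · -- three solutions
    refine ⟨f (π / 3), ?_, π / 3, -(π / 3), 2 * π / 3, ⟨by linarith, by linarith⟩,
      ⟨by linarith, by linarith⟩, ⟨by linarith, by linarith⟩,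
      by intro h; nlinarith, by intro h; nlinarith, by intro h; nlinarith,
      rfl, ?_, ?_⟩
    · rw [hf]
      exact mul_pos hC (div_pos (by positivity) (aux_denom_pos hr0 hr1 _))
    · apply heq
      rw [Real.cos_neg]
    · apply heq
      rw [show (2 * π / 3 : ℝ) = π - π / 3 by ring, Real.cos_pi_sub]
      ring
end

section
/- For all r ∈ (0,1), θ ∈ (0, π/2), x ∈ (0, φ) with φ ∈ (0, π/2) and r < (cos φ)/4, the quantity L_r(θ,x) = ((1+r²)² + 4r²(1 − sin(θ−x)·sin(θ+x)))·cos x − 4r(1+r²)·cos θ is positive; moreover L_r(θ,x) ≥ 4(1+r²)·((cos φ)/4 − r). -/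
open Real

theorem stmt_13 (φ r θ x : ℝ) (hφ : φ ∈ Set.Ioo 0 (π / 2))
    (hr : r ∈ Set.Ioo 0 (Real.cos φ / 4)) (hθ : θ ∈ Set.Ioo 0 (π / 2))
    (hx : x ∈ Set.Ioo 0 φ) :
    0 < ((1 + r ^ 2) ^ 2 + 4 * r ^ 2 * (1 - Real.sin (θ - x) * Real.sin (θ + x))) * Real.cos x
        - 4 * r * (1 + r ^ 2) * Real.cos θ ∧
    4 * (1 + r ^ 2) * (Real.cos φ / 4 - r) ≤
      ((1 + r ^ 2) ^ 2 + 4 * r ^ 2 * (1 - Real.sin (θ - x) * Real.sin (θ + x))) * Real.cos x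
        - 4 * r * (1 + r ^ 2) * Real.cos θ := by
  obtain ⟨hφ0, hφ2⟩ := hφ
  obtain ⟨hr0, hr1⟩ := hr
  obtain ⟨hθ0, hθ2⟩ := hθ
  obtain ⟨hx0, hxφ⟩ := hx
  have hcφ : 0 < Real.cos φ := Real.cos_pos_of_mem_Ioo ⟨by linarith [Real.pi_pos], hφ2⟩
  have hcx : 0 < Real.cos x := Real.cos_pos_of_mem_Ioo ⟨by linarith [Real.pi_pos], by linarith⟩
  have hcc : Real.cos φ < Real.cos x :=
    Real.cos_lt_cos_of_nonneg_of_le_pi (le_of_lt hx0) (by linarith [Real.pi_pos]) hxφ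
  have hct : Real.cos θ ≤ 1 := Real.cos_le_one θ
  have hct0 : 0 < Real.cos θ := Real.cos_pos_of_mem_Ioo ⟨by linarith [Real.pi_pos], hθ2⟩
  have hs1 := Real.neg_one_le_sin (θ - x)
  have hs2 := Real.sin_le_one (θ - x)
  have hs3 := Real.neg_one_le_sin (θ + x)
  have hs4 := Real.sin_le_one (θ + x)
  have hss : Real.sin (θ - x) * Real.sin (θ + x) ≤ 1 := by nlinarith
  have hr2 : (0:ℝ) < 1 + r ^ 2 := by positivity
  have key : 4 * (1 + r ^ 2) * (Real.cos φ / 4 - r) ≤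
      ((1 + r ^ 2) ^ 2 + 4 * r ^ 2 * (1 - Real.sin (θ - x) * Real.sin (θ + x))) * Real.cos x
        - 4 * r * (1 + r ^ 2) * Real.cos θ := by
    have h1 : (0:ℝ) ≤ 4 * r ^ 2 * (1 - Real.sin (θ - x) * Real.sin (θ + x)) * Real.cos x :=
      mul_nonneg (mul_nonneg (by positivity) (by linarith)) hcx.le
    have h2 : (0:ℝ) ≤ (1 + r ^ 2) ^ 2 * (Real.cos x - Real.cos φ) :=
      mul_nonneg (sq_nonneg _) (by linarith)
    have h3 : (0:ℝ) ≤ 4 * r * (1 + r ^ 2) * (1 - Real.cos θ) :=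
      mul_nonneg (by positivity) (by linarith)
    have h4 : (0:ℝ) ≤ r ^ 2 * (1 + r ^ 2) * Real.cos φ := by positivity
    nlinarith [h1, h2, h3, h4]
  refine ⟨lt_of_lt_of_le ?_ key, key⟩
  have : 0 < Real.cos φ / 4 - r := by linarith
  positivity
end

section
/- Let φ ∈ (0, π/2), r_φ = (cos φ)/4, and let μ be a symmetric probability measure on the unit circle supported in {e^{iθ} : θ ∈ [−φ, φ]}. For every r ∈ (0, r_φ), the density f_r(θ) = ((1−r²)/(2π)) ∫ 1/(1 − 2r cos(θ−x) + r²) dμ(x) of PK_{r,0} ⊛ μ is non-increasing on (0, π) and non-decreasing on (−π, 0); hence PK_{r,0} ⊛ μ is unimodal with mode 0. -/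
open Real MeasureTheory

private lemma bracket_nonneg' (r u v c₁ c₂ : ℝ) (hr : 0 < r) (hu : 4*r < u)
    (hu1 : u ≤ 1) (hc₁' : c₁ ≤ 1) (hc₂' : c₂ ≤ 1) :
    0 ≤ 2*r*u*((1+r^2)^2 + 4*r^2*v^2) + 8*r^3*u*(c₁*c₂) - 4*r^2*(1+r^2)*(c₁+c₂) := by
  have hru : 0 < 2*r*u := by nlinarith
  have h1 : 0 ≤ 4*r^2*((1+r^2) - 2*r*u)*(2 - c₁ - c₂) := by
    have hab : 0 ≤ (1 + r^2) - 2*r*u := by nlinarith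
    have h2c : (0:ℝ) ≤ 2 - c₁ - c₂ := by linarith
    have : (0:ℝ) ≤ 4*r^2 := by positivity
    exact mul_nonneg (mul_nonneg this hab) h2c
  have h2 : 0 ≤ 4*r^2*(2*r*u)*((1-c₁)*(1-c₂)) := by
    have : (0:ℝ) ≤ (1-c₁)*(1-c₂) := mul_nonneg (by linarith) (by linarith)
    have h4 : (0:ℝ) ≤ 4*r^2*(2*r*u) := by positivity
    exact mul_nonneg h4 this
  have h3 : 0 ≤ 2*r*u*(4*r^2*v^2) := by positivity
  have h4 : 0 ≤ (1+r^2)*((1+r^2)*(2*r*u) - 8*r^2) := by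
    have : 8*r^2 < (1+r^2)*(2*r*u) := by nlinarith
    nlinarith
  have h5 : 0 ≤ 4*r^2*(2*r*u) := by positivity
  nlinarith [h1, h2, h3, h4, h5]

private lemma denom_pos' (r u v c s : ℝ) (hr : 0 < r) (hr1 : r < 1)
    (huv : u^2 + v^2 = 1) (hcs : c^2 + s^2 = 1) :
    0 < 1 - 2*r*(c*u + s*v) + r^2 := by
  have hw : (c*u + s*v)^2 + (c*v - s*u)^2 = 1 := by
    linear_combination (u^2+v^2)*hcs + huv
  have hw1 : c*u + s*v ≤ 1 := by nlinarith [sq_nonneg (c*u + s*v - 1), sq_nonneg (c*v - s*u)]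
  nlinarith [sq_nonneg (1 - r)]

private lemma key' (r u v c₁ s₁ c₂ s₂ : ℝ) (hr : 0 < r) (hu : 4*r < u) (hu1 : u ≤ 1)
    (huv : u^2 + v^2 = 1) (hs₁ : c₁^2 + s₁^2 = 1) (hs₂ : c₂^2 + s₂^2 = 1)
    (hc : c₂ ≤ c₁) :
    1/(1 - 2*r*(c₂*u + s₂*v) + r^2) + 1/(1 - 2*r*(c₂*u - s₂*v) + r^2) ≤
    1/(1 - 2*r*(c₁*u + s₁*v) + r^2) + 1/(1 - 2*r*(c₁*u - s₁*v) + r^2) := by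
  have hr1 : r < 1 := by nlinarith
  have huv' : u^2 + (-v)^2 = 1 := by rw [neg_sq]; exact huv
  have hp₁ := denom_pos' r u v c₁ s₁ hr hr1 huv hs₁
  have hp₂ := denom_pos' r u v c₂ s₂ hr hr1 huv hs₂
  have hq₁ : 0 < 1 - 2*r*(c₁*u - s₁*v) + r^2 := by
    have := denom_pos' r u (-v) c₁ s₁ hr hr1 huv' hs₁
    linarith [this, show c₁*u + s₁*(-v) = c₁*u - s₁*v from by ring]
  have hq₂ : 0 < 1 - 2*r*(c₂*u - s₂*v) + r^2 := by
    have := denom_pos' r u (-v) c₂ s₂ hr hr1 huv' hs₂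
    linarith [this, show c₂*u + s₂*(-v) = c₂*u - s₂*v from by ring]
  rw [div_add_div _ _ hp₂.ne' hq₂.ne', div_add_div _ _ hp₁.ne' hq₁.ne',
    div_le_div_iff₀ (by positivity) (by positivity)]
  have hc₁' : c₁ ≤ 1 := by nlinarith [sq_nonneg s₁, sq_nonneg (c₁ - 1)]
  have hc₂' : c₂ ≤ 1 := by nlinarith [sq_nonneg s₂, sq_nonneg (c₂ - 1)]
  have hbr := bracket_nonneg' r u v c₁ c₂ hr hu hu1 hc₁' hc₂'
  have hid : ((1 - 2*r*(c₁*u - s₁*v) + r^2) + (1 - 2*r*(c₁*u + s₁*v) + r^2)) *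
      ((1 - 2*r*(c₂*u + s₂*v) + r^2) * (1 - 2*r*(c₂*u - s₂*v) + r^2))
    - ((1 - 2*r*(c₂*u - s₂*v) + r^2) + (1 - 2*r*(c₂*u + s₂*v) + r^2)) *
      ((1 - 2*r*(c₁*u + s₁*v) + r^2) * (1 - 2*r*(c₁*u - s₁*v) + r^2))
    = 2*(c₁-c₂)*(2*r*u*((1+r^2)^2 + 4*r^2*v^2) + 8*r^3*u*(c₁*c₂) - 4*r^2*(1+r^2)*(c₁+c₂)) := by
    linear_combination (8*r^2*v^2*((1+r^2) - 2*r*u*c₂))*hs₁ - (8*r^2*v^2*((1+r^2)-2*r*u*c₁))*hs₂ +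
      (8*r^2*((1+r^2 - 2*r*u*c₁)*c₂^2 - (1+r^2-2*r*u*c₂)*c₁^2))*huv
  nlinarith [hid, mul_nonneg (sub_nonneg.2 hc) hbr]

theorem stmt_14 (φ : ℝ) (hφ : φ ∈ Set.Ioo 0 (π / 2))
    (μ : Measure ℝ) [IsProbabilityMeasure μ]
    (hsupp : μ (Set.Icc (-φ) φ)ᶜ = 0)
    (hsym : ∀ B : Set ℝ, MeasurableSet B → μ B = μ ((fun x => -x) ⁻¹' B))
    (r : ℝ) (hr : r ∈ Set.Ioo 0 (Real.cos φ / 4)) :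
    AntitoneOn (fun θ : ℝ =>
        (1 - r ^ 2) / (2 * π) * ∫ x, 1 / (1 - 2 * r * Real.cos (θ - x) + r ^ 2) ∂μ)
      (Set.Ioo 0 π) ∧
    MonotoneOn (fun θ : ℝ =>
        (1 - r ^ 2) / (2 * π) * ∫ x, 1 / (1 - 2 * r * Real.cos (θ - x) + r ^ 2) ∂μ)
      (Set.Ioo (-π) 0) := by
  obtain ⟨hφ0, hφπ⟩ := hφ
  obtain ⟨hr0, hrφ⟩ := hr
  have hπ : (0:ℝ) < π := Real.pi_pos
  have hcφ : 0 < Real.cos φ := Real.cos_pos_of_mem_Ioo ⟨by linarith, hφπ⟩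
  have hcφ1 : Real.cos φ ≤ 1 := Real.cos_le_one φ
  have hr1 : r < 1 := by linarith
  have hdpos : ∀ t : ℝ, 0 < 1 - 2*r*Real.cos t + r^2 := by
    intro t
    nlinarith [Real.cos_le_one t, sq_nonneg (1 - r)]
  -- integrability
  have hint : ∀ h : ℝ → ℝ, Continuous h →
      Integrable (fun x => 1 / (1 - 2*r*Real.cos (h x) + r^2)) μ := by
    intro h hh
    have hcont : Continuous fun x => 1 / (1 - 2*r*Real.cos (h x) + r^2) :=
      Continuous.div continuous_const
        (by fun_prop) (fun x => (hdpos (h x)).ne')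
    refine (integrable_const (1 / (1 - r)^2)).mono' hcont.aestronglyMeasurable ?_
    filter_upwards with x
    rw [Real.norm_eq_abs, abs_of_pos (one_div_pos.2 (hdpos (h x)))]
    apply one_div_le_one_div_of_le (pow_pos (by linarith) 2)
    nlinarith [Real.cos_le_one (h x)]
  have hmap : μ.map (fun x : ℝ => -x) = μ := by
    ext B hB
    rw [Measure.map_apply measurable_neg hB]
    exact (hsym B hB).symm
  have hflip : ∀ θ : ℝ, ∫ x, 1 / (1 - 2*r*Real.cos (θ - x) + r^2) ∂μ
      = ∫ x, 1 / (1 - 2*r*Real.cos (θ + x) + r^2) ∂μ := by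
    intro θ
    have hcont : Continuous fun x : ℝ => 1 / (1 - 2*r*Real.cos (θ - x) + r^2) :=
      Continuous.div continuous_const (by fun_prop) (fun x => (hdpos (θ - x)).ne')
    conv_lhs => rw [← hmap]
    rw [integral_map measurable_neg.aemeasurable hcont.aestronglyMeasurable]
    simp only [sub_neg_eq_add]
  have hae : ∀ᵐ x ∂μ, x ∈ Set.Icc (-φ) φ := by
    rw [MeasureTheory.ae_iff]
    exact hsupp
  -- core monotonicity in cos θ
  have hmono : ∀ θ θ' : ℝ, Real.cos θ' ≤ Real.cos θ →
      (∫ x, 1 / (1 - 2*r*Real.cos (θ' - x) + r^2) ∂μ)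
      ≤ ∫ x, 1 / (1 - 2*r*Real.cos (θ - x) + r^2) ∂μ := by
    intro θ θ' h
    have e : ∀ t : ℝ, 2 * ∫ x, 1 / (1 - 2*r*Real.cos (t - x) + r^2) ∂μ
        = ∫ x, (1 / (1 - 2*r*Real.cos (t - x) + r^2)
            + 1 / (1 - 2*r*Real.cos (t + x) + r^2)) ∂μ := by
      intro t
      rw [integral_add (hint (fun x => t - x) (by fun_prop))
        (hint (fun x => t + x) (by fun_prop)), ← hflip t]
      ring
    have h2 : (∫ x, (1 / (1 - 2*r*Real.cos (θ' - x) + r^2)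
            + 1 / (1 - 2*r*Real.cos (θ' + x) + r^2)) ∂μ)
        ≤ ∫ x, (1 / (1 - 2*r*Real.cos (θ - x) + r^2)
            + 1 / (1 - 2*r*Real.cos (θ + x) + r^2)) ∂μ := by
      refine integral_mono_ae
        ((hint (fun x => θ' - x) (by fun_prop)).add (hint (fun x => θ' + x) (by fun_prop)))
        ((hint (fun x => θ - x) (by fun_prop)).add (hint (fun x => θ + x) (by fun_prop))) ?_
      filter_upwards [hae] with x hx
      have hxφ : |x| ≤ φ := abs_le.2 ⟨hx.1, hx.2⟩
      have hcx : Real.cos φ ≤ Real.cos x := by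
        rw [← Real.cos_abs x]
        exact Real.cos_le_cos_of_nonneg_of_le_pi (abs_nonneg x) (by linarith) hxφ
      simp only [Real.cos_sub, Real.cos_add]
      exact key' r (Real.cos x) (Real.sin x) (Real.cos θ) (Real.sin θ)
        (Real.cos θ') (Real.sin θ') hr0 (by linarith) (Real.cos_le_one x)
        (Real.cos_sq_add_sin_sq x) (Real.cos_sq_add_sin_sq θ)
        (Real.cos_sq_add_sin_sq θ') h
    rw [← e θ, ← e θ'] at h2
    linarith
  have hcst : 0 ≤ (1 - r^2) / (2*π) := by
    apply div_nonneg (by nlinarith) (by positivity)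
  constructor
  · intro a ha b hb hab
    exact mul_le_mul_of_nonneg_left
      (hmono a b (Real.cos_le_cos_of_nonneg_of_le_pi ha.1.le hb.2.le hab)) hcst
  · intro a ha b hb hab
    have hcab : Real.cos a ≤ Real.cos b := by
      rw [← Real.cos_neg a, ← Real.cos_neg b]
      exact Real.cos_le_cos_of_nonneg_of_le_pi (by linarith [hb.2.le])
        (by linarith [ha.1.le]) (by linarith)
    exact mul_le_mul_of_nonneg_left (hmono b a hcab) hcst
end

section
/- Let g₁(θ) = 4·(−a·sin θ·(1 + cos θ) + 2b·cos θ·(1 − cos θ)) with a, b > 0 satisfying a²/(4b²) < 1/27. Then g₁(0) = 0, g₁′(0) = −8a < 0, g₁ < 0 on [π/2, π), and there exist α, β with 0 < α < π/3 < β < π/2 such that g₁ > 0 on (α, β) and g₁ < 0 on (0, α) ∪ (β, π). -/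
open Real

lemma hmono (x y : ℝ) (hx : 0 ≤ x) (hxy : x < y) (hy : y ≤ 1/2) :
    x^2*(1-x)/(1+x)^3 < y^2*(1-y)/(1+y)^3 := by
  have hy0 : 0 < y := lt_of_le_of_lt hx hxy
  have h1 : (0:ℝ) < (1+x)^3 := by positivity
  have h2 : (0:ℝ) < (1+y)^3 := pow_pos (by linarith) 3
  rw [div_lt_div_iff₀ h1 h2]
  have hQ : 0 < -(4*x^2+3*x+1)*y^2 + (1+2*x-3*x^2)*y + x*(1-x) := by
    have hA : 0 ≤ (1/2 - y) * x * (2+2*y)^2 :=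
      mul_nonneg (mul_nonneg (by linarith) hx) (sq_nonneg _)
    have hB : 0 ≤ (y - x) * x * (4*y^2+3*y+1) :=
      mul_nonneg (mul_nonneg (by linarith) hx) (by nlinarith [sq_nonneg y])
    have hD : 0 < (y - x) * (3 - y - 6*y^2 - 4*y^3) := by
      apply mul_pos (by linarith)
      nlinarith [mul_nonneg hy0.le (sub_nonneg.2 hy), mul_nonneg (mul_nonneg hy0.le hy0.le) (sub_nonneg.2 hy)]
    nlinarith [hA, hB, hD]
  nlinarith [mul_pos (sub_pos.2 hxy) hQ]

lemma hanti (x y : ℝ) (hx : 1/2 ≤ x) (hxy : x < y) (hy : y ≤ 1) :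
    y^2*(1-y)/(1+y)^3 < x^2*(1-x)/(1+x)^3 := by
  have h1 : (0:ℝ) < (1+x)^3 := pow_pos (by linarith) 3
  have h2 : (0:ℝ) < (1+y)^3 := pow_pos (by linarith) 3
  rw [div_lt_div_iff₀ h2 h1]
  have hu : (0:ℝ) ≤ x - 1/2 := by linarith
  have ht : (0:ℝ) < y - x := by linarith
  have hQ : 0 < (4*x^2+3*x+1)*y^2 - (1+2*x-3*x^2)*y - x*(1-x) := by
    nlinarith [mul_nonneg hu ht.le, mul_nonneg hu hu, mul_nonneg (mul_nonneg hu hu) hu,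
      mul_nonneg (mul_nonneg (mul_nonneg hu hu) hu) hu, mul_nonneg (mul_nonneg hu hu) ht.le,
      mul_nonneg (mul_nonneg (mul_nonneg hu hu) hu) ht.le, mul_nonneg ht.le ht.le,
      mul_nonneg (mul_nonneg hu ht.le) ht.le, mul_nonneg (mul_nonneg (mul_nonneg hu hu) ht.le) ht.le]
  nlinarith [mul_pos ht hQ]

lemma key_pos (a b s c : ℝ) (ha : 0 < a) (hb : 0 < b) (hs : 0 < s) (hc0 : 0 < c) (hc1 : c < 1)
    (hsq : s^2 = 1 - c^2) (h : a^2*(1+c)^3 < 4*b^2*(c^2*(1-c))) :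
    a*s*(1+c) < 2*b*c*(1-c) := by
  have hL : 0 < a*s*(1+c) := mul_pos (mul_pos ha hs) (by linarith)
  have hR : 0 < 2*b*c*(1-c) := mul_pos (mul_pos (by linarith) hc0) (by linarith)
  have e1 : (a*s*(1+c))^2 = a^2*(1-c^2)*(1+c)^2 := by rw [← hsq]; ring
  have hsq2 : (a*s*(1+c))^2 < (2*b*c*(1-c))^2 := by
    nlinarith [e1, mul_lt_mul_of_pos_right h (show (0:ℝ) < 1-c by linarith)]
  exact lt_of_pow_lt_pow_left₀ 2 hR.le hsq2

lemma key_neg (a b s c : ℝ) (ha : 0 < a) (hb : 0 < b) (hs : 0 < s) (hc0 : 0 < c) (hc1 : c < 1)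
    (hsq : s^2 = 1 - c^2) (h : 4*b^2*(c^2*(1-c)) < a^2*(1+c)^3) :
    2*b*c*(1-c) < a*s*(1+c) := by
  have hL : 0 < a*s*(1+c) := mul_pos (mul_pos ha hs) (by linarith)
  have hR : 0 < 2*b*c*(1-c) := mul_pos (mul_pos (by linarith) hc0) (by linarith)
  have e1 : (a*s*(1+c))^2 = a^2*(1-c^2)*(1+c)^2 := by rw [← hsq]; ring
  have hsq2 : (2*b*c*(1-c))^2 < (a*s*(1+c))^2 := by
    nlinarith [e1, mul_lt_mul_of_pos_right h (show (0:ℝ) < 1-c by linarith)]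
  exact lt_of_pow_lt_pow_left₀ 2 hL.le hsq2

theorem stmt_15 (a b : ℝ) (ha : 0 < a) (hb : 0 < b) (hab : a ^ 2 / (4 * b ^ 2) < 1 / 27) :
    let g₁ : ℝ → ℝ := fun θ =>
      4 * (-a * Real.sin θ * (1 + Real.cos θ) + 2 * b * Real.cos θ * (1 - Real.cos θ))
    g₁ 0 = 0 ∧ deriv g₁ 0 = -8 * a ∧ -8 * a < 0 ∧
    (∀ θ ∈ Set.Ico (π / 2) π, g₁ θ < 0) ∧
    ∃ α β : ℝ, 0 < α ∧ α < π / 3 ∧ π / 3 < β ∧ β < π / 2 ∧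
      (∀ θ ∈ Set.Ioo α β, 0 < g₁ θ) ∧
      (∀ θ ∈ Set.Ioo 0 α ∪ Set.Ioo β π, g₁ θ < 0) := by
  intro g₁
  have pi_pos := Real.pi_pos
  -- part 1
  have p1 : g₁ 0 = 0 := by
    show 4 * (-a * Real.sin 0 * (1 + Real.cos 0) + 2 * b * Real.cos 0 * (1 - Real.cos 0)) = 0
    norm_num
  -- part 2
  have p2 : deriv g₁ 0 = -8 * a := by
    have hA : HasDerivAt (fun θ : ℝ => -a * Real.sin θ * (1 + Real.cos θ))
        ((-a * Real.cos 0) * (1 + Real.cos 0) + (-a * Real.sin 0) * (-Real.sin 0)) 0 :=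
      (((Real.hasDerivAt_sin 0).const_mul (-a)).mul ((Real.hasDerivAt_cos 0).const_add 1))
    have hB : HasDerivAt (fun θ : ℝ => 2 * b * Real.cos θ * (1 - Real.cos θ))
        ((2 * b * (-Real.sin 0)) * (1 - Real.cos 0) + (2 * b * Real.cos 0) * (-(-Real.sin 0))) 0 :=
      (((Real.hasDerivAt_cos 0).const_mul (2*b)).mul ((Real.hasDerivAt_cos 0).const_sub 1))
    have hAB := (hA.add hB).const_mul 4
    have hfin : HasDerivAt g₁ (-8*a) 0 := by
      refine hAB.congr_deriv ?_
      norm_num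
      ring
    exact hfin.deriv
  -- part 4 : negativity on [π/2, π)
  have p4 : ∀ θ ∈ Set.Ico (π / 2) π, g₁ θ < 0 := by
    rintro θ ⟨h1, h2⟩
    have hs : 0 < Real.sin θ := Real.sin_pos_of_pos_of_lt_pi (by linarith) h2
    have hc : Real.cos θ ≤ 0 := Real.cos_nonpos_of_pi_div_two_le_of_le h1 (by linarith)
    show 4 * (-a * Real.sin θ * (1 + Real.cos θ) + 2 * b * Real.cos θ * (1 - Real.cos θ)) < 0
    have hc1 : -1 ≤ Real.cos θ := Real.neg_one_le_cos θ
    rcases hc.lt_or_eq with hlt | heq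
    · nlinarith [mul_nonneg (mul_nonneg ha.le hs.le) (show (0:ℝ) ≤ 1 + Real.cos θ by linarith),
        mul_pos (mul_pos hb (neg_pos.2 hlt)) (show (0:ℝ) < 1 - Real.cos θ by linarith)]
    · rw [heq]
      nlinarith [mul_pos ha hs]
  refine ⟨p1, p2, by linarith, p4, ?_⟩
  -- the interesting part
  set k : ℝ := a^2/(4*b^2) with hk
  have hk0 : 0 < k := by positivity
  have hk27 : k < 1/27 := by simpa [hk] using hab
  set h : ℝ → ℝ := fun c => c^2*(1-c)/(1+c)^3 with hhdef
  have hcont : ContinuousOn h (Set.Icc 0 1) := by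
    apply ContinuousOn.div (by fun_prop) (by fun_prop)
    intro x hx
    have := hx.1
    positivity
  have hhalf : h (1/2) = 1/27 := by norm_num [hhdef]
  have h0 : h 0 = 0 := by norm_num [hhdef]
  have h1v : h 1 = 0 := by norm_num [hhdef]
  -- c₂ ∈ (0, 1/2) with h c₂ = k
  obtain ⟨c₂, hc₂mem, hc₂⟩ :=
    intermediate_value_Ioo (by norm_num : (0:ℝ) ≤ 1/2)
      (hcont.mono (Set.Icc_subset_Icc le_rfl (by norm_num)))
      (show k ∈ Set.Ioo (h 0) (h (1/2)) by rw [h0, hhalf]; exact ⟨hk0, hk27⟩)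
  -- c₁ ∈ (1/2, 1) with h c₁ = k
  obtain ⟨c₁, hc₁mem, hc₁⟩ :=
    intermediate_value_Ioo' (by norm_num : (1:ℝ)/2 ≤ 1)
      (hcont.mono (Set.Icc_subset_Icc (by norm_num) le_rfl))
      (show k ∈ Set.Ioo (h 1) (h (1/2)) by rw [h1v, hhalf]; exact ⟨hk0, hk27⟩)
  obtain ⟨hc₂0, hc₂half⟩ := hc₂mem
  obtain ⟨hc₁half, hc₁1⟩ := hc₁mem
  simp only [hhdef] at hc₁ hc₂
  set α := Real.arccos c₁ with hαdef
  set β := Real.arccos c₂ with hβdef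
  have harch : Real.arccos (1/2) = π/3 := by
    rw [← Real.cos_pi_div_three, Real.arccos_cos (by positivity) (by linarith)]
  have hα0 : 0 < α := Real.arccos_pos.2 hc₁1
  have hαπ3 : α < π/3 := by
    rw [← harch]
    exact Real.strictAntiOn_arccos ⟨by norm_num, by norm_num⟩ ⟨by linarith, hc₁1.le⟩ hc₁half
  have hπ3β : π/3 < β := by
    rw [← harch]
    exact Real.strictAntiOn_arccos ⟨by linarith, by linarith⟩ ⟨by norm_num, by norm_num⟩ hc₂half
  have hβπ2 : β < π/2 := Real.arccos_lt_pi_div_two.2 hc₂0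
  have hcosα : Real.cos α = c₁ := Real.cos_arccos (by linarith) hc₁1.le
  have hcosβ : Real.cos β = c₂ := Real.cos_arccos (by linarith) (by linarith)
  refine ⟨α, β, hα0, hαπ3, hπ3β, hβπ2, ?_, ?_⟩
  · -- positive on (α, β)
    rintro θ ⟨hθ1, hθ2⟩
    have hθ0 : 0 < θ := hα0.trans hθ1
    have hθπ2 : θ < π/2 := hθ2.trans hβπ2
    have hs : 0 < Real.sin θ := Real.sin_pos_of_pos_of_lt_pi hθ0 (by linarith)
    have hcu : Real.cos θ < c₁ := by
      rw [← hcosα]; exact Real.cos_lt_cos_of_nonneg_of_le_pi hα0.le (by linarith) hθ1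
    have hcl : c₂ < Real.cos θ := by
      rw [← hcosβ]; exact Real.cos_lt_cos_of_nonneg_of_le_pi hθ0.le (by linarith) hθ2
    have hc0 : 0 < Real.cos θ := hc₂0.trans hcl
    have hc1' : Real.cos θ < 1 := by linarith
    have hhc : k < (Real.cos θ)^2*(1-Real.cos θ)/(1+Real.cos θ)^3 := by
      rcases le_or_gt (1/2) (Real.cos θ) with H | H
      · rw [← hc₁]; exact hanti (Real.cos θ) c₁ H hcu hc₁1.le
      · rw [← hc₂]; exact hmono c₂ (Real.cos θ) hc₂0.le hcl H.le
    have hpoly : a^2*(1+Real.cos θ)^3 < 4*b^2*((Real.cos θ)^2*(1-Real.cos θ)) := by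
      rw [hk, div_lt_div_iff₀ (by positivity) (pow_pos (show (0:ℝ) < 1+Real.cos θ by linarith) 3)] at hhc
      linarith
    have hsq : (Real.sin θ)^2 = 1 - (Real.cos θ)^2 := Real.sin_sq θ
    have := key_pos a b (Real.sin θ) (Real.cos θ) ha hb hs hc0 hc1' hsq hpoly
    show 0 < 4 * (-a * Real.sin θ * (1 + Real.cos θ) + 2 * b * Real.cos θ * (1 - Real.cos θ))
    linarith
  · -- negative on (0,α) ∪ (β,π)
    rintro θ (⟨hθ1, hθ2⟩ | ⟨hθ1, hθ2⟩)
    · have hθπ2 : θ < π/2 := by linarith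
      have hs : 0 < Real.sin θ := Real.sin_pos_of_pos_of_lt_pi hθ1 (by linarith)
      have hcgt : c₁ < Real.cos θ := by
        rw [← hcosα]; exact Real.cos_lt_cos_of_nonneg_of_le_pi hθ1.le (by linarith) hθ2
      have hc1' : Real.cos θ < 1 := by
        have := Real.cos_lt_cos_of_nonneg_of_le_pi (le_refl (0:ℝ)) (by linarith) hθ1
        rwa [Real.cos_zero] at this
      have hc0 : 0 < Real.cos θ := by linarith
      have hhc : (Real.cos θ)^2*(1-Real.cos θ)/(1+Real.cos θ)^3 < k := by
        rw [← hc₁]; exact hanti c₁ (Real.cos θ) hc₁half.le hcgt hc1'.le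
      have hpoly : 4*b^2*((Real.cos θ)^2*(1-Real.cos θ)) < a^2*(1+Real.cos θ)^3 := by
        rw [hk, div_lt_div_iff₀ (pow_pos (show (0:ℝ) < 1+Real.cos θ by linarith) 3) (by positivity)] at hhc
        linarith
      have hsq : (Real.sin θ)^2 = 1 - (Real.cos θ)^2 := Real.sin_sq θ
      have := key_neg a b (Real.sin θ) (Real.cos θ) ha hb hs hc0 hc1' hsq hpoly
      show 4 * (-a * Real.sin θ * (1 + Real.cos θ) + 2 * b * Real.cos θ * (1 - Real.cos θ)) < 0
      linarith
    · rcases lt_or_ge θ (π/2) with H | H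
      · have hs : 0 < Real.sin θ := Real.sin_pos_of_pos_of_lt_pi (by linarith) hθ2
        have hclt : Real.cos θ < c₂ := by
          rw [← hcosβ]; exact Real.cos_lt_cos_of_nonneg_of_le_pi (by linarith) (by linarith) hθ1
        have hc0 : 0 < Real.cos θ := Real.cos_pos_of_mem_Ioo ⟨by linarith, H⟩
        have hc1' : Real.cos θ < 1 := by linarith
        have hhc : (Real.cos θ)^2*(1-Real.cos θ)/(1+Real.cos θ)^3 < k := by
          rw [← hc₂]; exact hmono (Real.cos θ) c₂ hc0.le hclt hc₂half.le
        have hpoly : 4*b^2*((Real.cos θ)^2*(1-Real.cos θ)) < a^2*(1+Real.cos θ)^3 := by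
          rw [hk, div_lt_div_iff₀ (pow_pos (show (0:ℝ) < 1+Real.cos θ by linarith) 3) (by positivity)] at hhc
          linarith
        have hsq : (Real.sin θ)^2 = 1 - (Real.cos θ)^2 := Real.sin_sq θ
        have := key_neg a b (Real.sin θ) (Real.cos θ) ha hb hs hc0 hc1' hsq hpoly
        show 4 * (-a * Real.sin θ * (1 + Real.cos θ) + 2 * b * Real.cos θ * (1 - Real.cos θ)) < 0
        linarith
      · exact p4 θ ⟨H, hθ2⟩
end
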